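/- Entanglement spectrum for an AIII example (Section 5.3). Let b ∈ ℂ with 0 < |b| < 1, let u(z) = (z − b)/(1 − conj(b)·z), and for λ ∈ ℂ let Φ_λ be the 2×2-matrix-valued symbol on the unit circle with Φ_λ(e^{iθ}) = [[λ, −u(e^{iθ})], [−1/u(e^{iθ}), λ]]. Then for every integer N ≥ 1 and every λ ∈ ℂ, D_N[Φ_λ] = (λ² − 1)^{N−1} · (λ² − |b|^{2N}). (This is the characteristic polynomial det(λ − Â_N) of the matrix Â_N = 1 − 2C_N built from the fermionic correlation matrix C_N of a subsystem of N unit cells of the AIII chain with f(z) = z^{-1}(z−b)².) -/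

import Mathlib

open scoped BigOperators
open Filter

/-- The `k`-th Fourier coefficient of a symbol `t` on the unit circle. -/
noncomputable def symbolCoeff (t : ℂ → ℂ) (k : ℤ) : ℂ :=
  (1 / (2 * Real.pi)) *
    ∫ θ in (0:ℝ)..(2 * Real.pi),
      t (Complex.exp (Complex.I * (θ : ℂ))) * Complex.exp (-(Complex.I * (k : ℂ) * (θ : ℂ)))

/-- The `N × N` Toeplitz determinant `D_N[t]` generated by the symbol `t`. -/
noncomputable def toeplitzDet (t : ℂ → ℂ) (N : ℕ) : ℂ :=
  Matrix.det (Matrix.of fun m n : Fin N => symbolCoeff t ((m : ℤ) - (n : ℤ)))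

/-- The `k`-th (matrix) Fourier coefficient of a `2 × 2`-matrix-valued symbol. -/
noncomputable def blockSymbolCoeff (Φ : ℂ → Matrix (Fin 2) (Fin 2) ℂ) (k : ℤ) :
    Matrix (Fin 2) (Fin 2) ℂ :=
  Matrix.of fun i j => symbolCoeff (fun w => Φ w i j) k

/-- The `2N × 2N` block Toeplitz determinant `D_N[Φ]` generated by the
`2 × 2`-matrix-valued symbol `Φ`. -/
noncomputable def blockToeplitzDet (Φ : ℂ → Matrix (Fin 2) (Fin 2) ℂ) (N : ℕ) : ℂ :=
  Matrix.det (Matrix.of fun p q : Fin N × Fin 2 =>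
    blockSymbolCoeff Φ ((p.1 : ℤ) - (q.1 : ℤ)) p.2 q.2)

open intervalIntegral
open scoped Matrix

lemma exp_int_integral (m : ℤ) :
    ∫ θ in (0:ℝ)..(2*Real.pi), Complex.exp (Complex.I * m * θ) =
      if m = 0 then ((2*Real.pi : ℝ) : ℂ) else 0 := by
  rcases eq_or_ne m 0 with h | h
  · simp [h]
  · have hc : Complex.I * m ≠ 0 := by simp [Complex.I_ne_zero, h]
    rw [if_neg h, integral_exp_mul_complex (a := (0:ℝ)) (b := 2*Real.pi) hc]
    have h1 : Complex.exp (Complex.I * m * ((2*Real.pi : ℝ) : ℂ)) = 1 := by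
      rw [show Complex.I * m * ((2*Real.pi : ℝ) : ℂ) = m * (2 * Real.pi * Complex.I) by
        push_cast; ring]
      exact Complex.exp_int_mul_two_pi_mul_I m
    push_cast at h1 ⊢
    rw [h1]; simp

lemma norm_exp_I_mul (θ : ℝ) : ‖Complex.exp (Complex.I * θ)‖ = 1 := by
  rw [Complex.norm_exp]
  simp

lemma geom_coeff (c : ℂ) (hc : ‖c‖ < 1) (k : ℤ) :
    ∫ θ in (0:ℝ)..(2*Real.pi),
        (1 - c * Complex.exp (Complex.I * θ))⁻¹ * Complex.exp (-(Complex.I * k * θ)) =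
      (if 0 ≤ k then ((2*Real.pi : ℝ) : ℂ) * c ^ k.toNat else 0) := by
  set z : ℝ → ℂ := fun θ => Complex.exp (Complex.I * θ) with hzdef
  have hznorm : ∀ θ : ℝ, ‖z θ‖ = 1 := norm_exp_I_mul
  have hcz : ∀ θ : ℝ, ‖c * z θ‖ < 1 := by
    intro θ; rw [norm_mul, hznorm, mul_one]; exact hc
  have hne : ∀ θ : ℝ, 1 - c * z θ ≠ 0 := by
    intro θ h
    have h2 : c * z θ = 1 := by linear_combination -h
    have h3 := hcz θ
    rw [h2] at h3
    simp at h3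
  have hcont_z : Continuous z := by fun_prop
  have hcont_inv : Continuous fun θ : ℝ => (1 - c * z θ)⁻¹ :=
    (continuous_const.sub (continuous_const.mul hcont_z)).inv₀ hne
  have hcont_e : ∀ m : ℤ, Continuous fun θ : ℝ => Complex.exp (-(Complex.I * m * θ)) := by
    intro m; fun_prop
  have hcont_f : Continuous fun θ : ℝ =>
      (1 - c * z θ)⁻¹ * Complex.exp (-(Complex.I * k * θ)) :=
    hcont_inv.mul (hcont_e k)
  -- pointwise split
  have hsplit : ∀ (M : ℕ) (θ : ℝ),
      (1 - c * z θ)⁻¹ * Complex.exp (-(Complex.I * k * θ)) =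
        (∑ n ∈ Finset.range M, c ^ n * Complex.exp (Complex.I * ((n : ℤ) - k) * θ)) +
          (c * z θ) ^ M * ((1 - c * z θ)⁻¹ * Complex.exp (-(Complex.I * k * θ))) := by
    intro M θ
    have hinv : (1 - c * z θ)⁻¹ =
        (∑ n ∈ Finset.range M, (c * z θ) ^ n) + (c * z θ) ^ M * (1 - c * z θ)⁻¹ := by
      set x := c * z θ with hx
      have hgs : (∑ n ∈ Finset.range M, x ^ n) * (1 - x) = 1 - x ^ M := by
        have := geom_sum_mul x M; linear_combination -this
      have hxne : (1 : ℂ) - x ≠ 0 := hne θ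
      have : (1 - x) * ((∑ n ∈ Finset.range M, x ^ n) + x ^ M * (1 - x)⁻¹) = 1 := by
        rw [mul_add, mul_comm (1-x), hgs, mul_comm (x ^ M), ← mul_assoc,
          mul_inv_cancel₀ hxne, one_mul]
        ring
      exact inv_eq_of_mul_eq_one_right this
    calc (1 - c * z θ)⁻¹ * Complex.exp (-(Complex.I * k * θ))
        = ((∑ n ∈ Finset.range M, (c * z θ) ^ n) + (c * z θ) ^ M * (1 - c * z θ)⁻¹) *
            Complex.exp (-(Complex.I * k * θ)) := by rw [← hinv]
      _ = (∑ n ∈ Finset.range M, (c * z θ) ^ n * Complex.exp (-(Complex.I * k * θ))) +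
            (c * z θ) ^ M * ((1 - c * z θ)⁻¹ * Complex.exp (-(Complex.I * k * θ))) := by
          rw [add_mul, Finset.sum_mul]; ring
      _ = (∑ n ∈ Finset.range M, c ^ n * Complex.exp (Complex.I * ((n : ℤ) - k) * θ)) +
            (c * z θ) ^ M * ((1 - c * z θ)⁻¹ * Complex.exp (-(Complex.I * k * θ))) := by
          congr 1
          apply Finset.sum_congr rfl
          intro n _
          rw [mul_pow, hzdef]
          rw [← Complex.exp_nat_mul, mul_assoc, ← Complex.exp_add]
          congr 2
          push_cast
          ring
  set T : ℂ := (if 0 ≤ k then ((2*Real.pi : ℝ) : ℂ) * c ^ k.toNat else 0) with hT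
  have key : ∀ M : ℕ, k.toNat + 1 ≤ M →
      ‖(∫ θ in (0:ℝ)..(2*Real.pi),
          (1 - c * z θ)⁻¹ * Complex.exp (-(Complex.I * k * θ))) - T‖ ≤
        (‖c‖ ^ M * (1 - ‖c‖)⁻¹) * (2*Real.pi) := by
    intro M hM
    have hg_cont : Continuous fun θ : ℝ =>
        (∑ n ∈ Finset.range M, c ^ n * Complex.exp (Complex.I * ((n : ℤ) - k) * θ)) := by
      apply continuous_finset_sum
      intro n _
      fun_prop
    have hr_cont : Continuous fun θ : ℝ =>
        (c * z θ) ^ M * ((1 - c * z θ)⁻¹ * Complex.exp (-(Complex.I * k * θ))) :=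
      ((continuous_const.mul hcont_z).pow M).mul hcont_f
    have hI : (∫ θ in (0:ℝ)..(2*Real.pi),
          (1 - c * z θ)⁻¹ * Complex.exp (-(Complex.I * k * θ))) =
        (∫ θ in (0:ℝ)..(2*Real.pi),
          (∑ n ∈ Finset.range M, c ^ n * Complex.exp (Complex.I * ((n : ℤ) - k) * θ))) +
        (∫ θ in (0:ℝ)..(2*Real.pi),
          (c * z θ) ^ M * ((1 - c * z θ)⁻¹ * Complex.exp (-(Complex.I * k * θ)))) := by
      rw [← intervalIntegral.integral_add
        (hg_cont.intervalIntegrable _ _) (hr_cont.intervalIntegrable _ _)]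
      apply intervalIntegral.integral_congr
      intro θ _
      exact hsplit M θ
    have hSum : (∫ θ in (0:ℝ)..(2*Real.pi),
          (∑ n ∈ Finset.range M, c ^ n * Complex.exp (Complex.I * ((n : ℤ) - k) * θ))) = T := by
      rw [intervalIntegral.integral_finset_sum]
      · have : ∀ n ∈ Finset.range M,
            (∫ θ in (0:ℝ)..(2*Real.pi), c ^ n * Complex.exp (Complex.I * ((n : ℤ) - k) * θ)) =
            (if n = k.toNat ∧ 0 ≤ k then ((2*Real.pi : ℝ) : ℂ) * c ^ k.toNat else 0) := by
          intro n _
          have hint := exp_int_integral ((n : ℤ) - k)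
          push_cast at hint ⊢
          rw [intervalIntegral.integral_const_mul, hint]
          rcases le_or_gt 0 k with hk | hk
          · by_cases hn : n = k.toNat
            · have : (n : ℤ) - k = 0 := by omega
              rw [if_pos this, if_pos ⟨hn, hk⟩, hn]
              ring
            · have : ¬ ((n : ℤ) - k = 0) := by omega
              rw [if_neg this, if_neg (by tauto), mul_zero]
          · have : ¬ ((n : ℤ) - k = 0) := by omega
            rw [if_neg this, if_neg (by omega), mul_zero]
        rw [Finset.sum_congr rfl this]
        rcases le_or_gt 0 k with hk | hk
        · have : ∀ n ∈ Finset.range M,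
              (if n = k.toNat ∧ 0 ≤ k then ((2*Real.pi : ℝ) : ℂ) * c ^ k.toNat else 0) =
              (if n = k.toNat then ((2*Real.pi : ℝ) : ℂ) * c ^ k.toNat else 0) := by
            intro n _; simp [hk]
          rw [Finset.sum_congr rfl this, Finset.sum_ite_eq' (Finset.range M) k.toNat]
          rw [if_pos (Finset.mem_range.mpr (by omega)), hT, if_pos hk]
        · have : ∀ n ∈ Finset.range M,
              (if n = k.toNat ∧ 0 ≤ k then ((2*Real.pi : ℝ) : ℂ) * c ^ k.toNat else 0) = 0 := by
            intro n _; simp [not_le.mpr hk]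
          rw [Finset.sum_congr rfl this, Finset.sum_const, smul_zero, hT, if_neg (by omega)]
      · intro n _
        exact (Continuous.intervalIntegrable (by fun_prop) _ _)
    have hRem : ‖(∫ θ in (0:ℝ)..(2*Real.pi),
          (c * z θ) ^ M * ((1 - c * z θ)⁻¹ * Complex.exp (-(Complex.I * k * θ))))‖ ≤
        (‖c‖ ^ M * (1 - ‖c‖)⁻¹) * (2*Real.pi) := by
      have hb : ∀ θ ∈ Set.uIoc (0:ℝ) (2*Real.pi),
          ‖(c * z θ) ^ M * ((1 - c * z θ)⁻¹ * Complex.exp (-(Complex.I * k * θ)))‖ ≤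
            ‖c‖ ^ M * (1 - ‖c‖)⁻¹ := by
        intro θ _
        rw [norm_mul, norm_mul, norm_pow, norm_mul, hznorm, mul_one]
        have he : ‖Complex.exp (-(Complex.I * k * θ))‖ = 1 := by
          rw [Complex.norm_exp]
          simp
        rw [he, mul_one]
        have h1c : (0:ℝ) < 1 - ‖c‖ := by linarith
        have hge : 1 - ‖c‖ ≤ ‖1 - c * z θ‖ := by
          have := norm_sub_norm_le (1 : ℂ) (c * z θ)
          rw [norm_one, norm_mul, hznorm, mul_one] at this
          linarith
        have : ‖(1 - c * z θ)⁻¹‖ ≤ (1 - ‖c‖)⁻¹ := by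
          rw [norm_inv]
          exact inv_anti₀ h1c hge
        exact mul_le_mul_of_nonneg_left this (by positivity)
      have := intervalIntegral.norm_integral_le_of_norm_le_const hb
      have hpi : |2*Real.pi - 0| = 2*Real.pi := by
        rw [sub_zero, abs_of_pos (by positivity)]
      rw [hpi] at this
      exact this
    rw [hI, hSum, add_sub_cancel_left]
    exact hRem
  have h0 : Tendsto (fun M : ℕ => (‖c‖ ^ M * (1 - ‖c‖)⁻¹) * (2*Real.pi)) atTop (nhds 0) := by
    have h1 := tendsto_pow_atTop_nhds_zero_of_lt_one (norm_nonneg c) hc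
    have h2 := (h1.mul_const ((1 - ‖c‖)⁻¹)).mul_const (2*Real.pi)
    simpa using h2
  have hle : ‖(∫ θ in (0:ℝ)..(2*Real.pi),
      (1 - c * z θ)⁻¹ * Complex.exp (-(Complex.I * k * θ))) - T‖ ≤ 0 := by
    apply ge_of_tendsto h0
    exact Filter.eventually_atTop.mpr ⟨k.toNat + 1, key⟩
  have := norm_le_zero_iff.mp hle
  linear_combination this

lemma geom_coeff_neg (c : ℂ) (hc : ‖c‖ < 1) (k : ℤ) :
    ∫ θ in (0:ℝ)..(2*Real.pi),
        (1 - c * Complex.exp (-(Complex.I * θ)))⁻¹ * Complex.exp (-(Complex.I * k * θ)) =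
      (if k ≤ 0 then ((2*Real.pi : ℝ) : ℂ) * c ^ (-k).toNat else 0) := by
  set g : ℝ → ℂ := fun θ =>
    (1 - c * Complex.exp (Complex.I * θ))⁻¹ * Complex.exp (-(Complex.I * ((-k : ℤ) : ℂ) * θ))
    with hg
  have hper : Function.Periodic g (2*Real.pi) := by
    intro θ
    simp only [hg]
    have e1 : Complex.exp (Complex.I * ((θ + 2*Real.pi : ℝ) : ℂ)) =
        Complex.exp (Complex.I * (θ : ℂ)) := by
      push_cast
      rw [mul_add, Complex.exp_add,
        show Complex.I * (2*(Real.pi:ℂ)) = 2*Real.pi*Complex.I by ring,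
        Complex.exp_two_pi_mul_I, mul_one]
    have e2 : Complex.exp (-(Complex.I * ((-k : ℤ) : ℂ) * ((θ + 2*Real.pi : ℝ) : ℂ))) =
        Complex.exp (-(Complex.I * ((-k : ℤ) : ℂ) * (θ : ℂ))) := by
      push_cast
      rw [show -(Complex.I * (-(k:ℂ)) * ((θ:ℂ) + 2*Real.pi)) =
          -(Complex.I * (-(k:ℂ)) * (θ:ℂ)) + (k:ℂ) * (2*Real.pi*Complex.I) by ring,
        Complex.exp_add]
      rw [show ((k:ℂ)) = ((k:ℤ):ℂ) by push_cast; ring, Complex.exp_int_mul_two_pi_mul_I, mul_one]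
    push_cast at e1 e2 ⊢
    rw [e1, e2]
  have h0 : ∫ θ in (0:ℝ)..(2*Real.pi),
      (1 - c * Complex.exp (-(Complex.I * θ)))⁻¹ * Complex.exp (-(Complex.I * k * θ)) =
      ∫ θ in (0:ℝ)..(2*Real.pi), g (-θ) := by
    apply intervalIntegral.integral_congr
    intro θ _
    simp only [hg]
    push_cast
    ring_nf
  have h1 : (∫ θ in (0:ℝ)..(2*Real.pi), g (-θ)) = ∫ θ in (-(2*Real.pi))..(0:ℝ), g θ := by
    simpa using intervalIntegral.integral_comp_neg (a := (0:ℝ)) (b := 2*Real.pi) g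
  have h2 : (∫ θ in (-(2*Real.pi))..(0:ℝ), g θ) = ∫ θ in (0:ℝ)..(2*Real.pi), g θ := by
    have := hper.intervalIntegral_add_eq (-(2*Real.pi)) 0
    simpa using this
  rw [h0, h1, h2, hg]
  have := geom_coeff c hc (-k)
  push_cast at this ⊢
  rw [this]
  by_cases hk : k ≤ 0
  · rw [if_pos (by omega : (0:ℤ) ≤ -k), if_pos hk]
  · rw [if_neg (by omega : ¬ (0:ℤ) ≤ -k), if_neg hk]

/-- Fourier coefficients of `u(z) = (z-b)/(1-conj b z)`. -/
noncomputable def uu (b : ℂ) (k : ℤ) : ℂ :=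
  if k = 0 then -b else if 0 < k then
    ((starRingEnd ℂ) b) ^ (k-1).toNat * (1 - b * (starRingEnd ℂ) b) else 0

/-- Fourier coefficients of `1/u(z) = (1-conj b z)/(z-b)`. -/
noncomputable def vv (b : ℂ) (k : ℤ) : ℂ :=
  if k = 0 then -(starRingEnd ℂ) b else if k < 0 then
    b ^ (-k-1).toNat * (1 - b * (starRingEnd ℂ) b) else 0

lemma two_pi_ne : ((2*Real.pi : ℝ) : ℂ) ≠ 0 := by
  simp [Real.pi_ne_zero]

lemma symbolCoeff_const (a : ℂ) (k : ℤ) :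
    symbolCoeff (fun _ => a) k = if k = 0 then a else 0 := by
  unfold symbolCoeff
  have h := exp_int_integral (-k)
  have h' : (∫ θ in (0:ℝ)..(2*Real.pi), Complex.exp (-(Complex.I * k * θ))) =
      if -k = 0 then ((2*Real.pi:ℝ):ℂ) else 0 := by
    rw [← h]
    apply intervalIntegral.integral_congr
    intro θ _
    push_cast
    ring_nf
  rw [intervalIntegral.integral_const_mul, h']
  rcases eq_or_ne k 0 with hk | hk
  · rw [if_pos (by omega), if_pos hk]
    have := two_pi_ne
    push_cast at this ⊢
    field_simp
  · rw [if_neg (by omega), if_neg hk, mul_zero, mul_zero]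

lemma norm_exp_I_mul' (θ : ℝ) : ‖Complex.exp (Complex.I * θ)‖ = 1 := by
  rw [Complex.norm_exp]; simp

lemma symbolCoeff_neg_u (b : ℂ) (hb1 : ‖b‖ < 1) (k : ℤ) :
    symbolCoeff (fun w => -((w - b) / (1 - (starRingEnd ℂ) b * w))) k = -(uu b k) := by
  have hcb : ‖(starRingEnd ℂ) b‖ < 1 := by rwa [RCLike.norm_conj]
  have hne : ∀ θ : ℝ, 1 - (starRingEnd ℂ) b * Complex.exp (Complex.I * θ) ≠ 0 := by
    intro θ h
    have h2 : (starRingEnd ℂ) b * Complex.exp (Complex.I * θ) = 1 := by linear_combination -h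
    have h3 : ‖(starRingEnd ℂ) b * Complex.exp (Complex.I * θ)‖ < 1 := by
      rw [norm_mul, norm_exp_I_mul', mul_one]; exact hcb
    rw [h2] at h3; simp at h3
  have hcont_inv : Continuous fun θ : ℝ =>
      (1 - (starRingEnd ℂ) b * Complex.exp (Complex.I * θ))⁻¹ :=
    Continuous.inv₀ (by fun_prop) hne
  unfold symbolCoeff
  have hpt : ∀ θ : ℝ,
      (-((Complex.exp (Complex.I * θ) - b) /
          (1 - (starRingEnd ℂ) b * Complex.exp (Complex.I * θ)))) *
        Complex.exp (-(Complex.I * k * θ)) =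
      -((1 - (starRingEnd ℂ) b * Complex.exp (Complex.I * θ))⁻¹ *
          Complex.exp (-(Complex.I * (k-1 : ℤ) * θ))) +
        b * ((1 - (starRingEnd ℂ) b * Complex.exp (Complex.I * θ))⁻¹ *
          Complex.exp (-(Complex.I * k * θ))) := by
    intro θ
    have he : Complex.exp (-(Complex.I * ((k:ℤ)-1 : ℤ) * θ)) =
        Complex.exp (Complex.I * θ) * Complex.exp (-(Complex.I * k * θ)) := by
      rw [← Complex.exp_add]
      congr 1
      push_cast
      ring
    rw [he]
    field_simp [hne θ]
    ring
  have hint : (∫ θ in (0:ℝ)..(2*Real.pi),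
      (-((Complex.exp (Complex.I * θ) - b) /
          (1 - (starRingEnd ℂ) b * Complex.exp (Complex.I * θ)))) *
        Complex.exp (-(Complex.I * k * θ))) =
      -(if 0 ≤ k-1 then ((2*Real.pi:ℝ):ℂ) * ((starRingEnd ℂ) b) ^ (k-1).toNat else 0) +
        b * (if 0 ≤ k then ((2*Real.pi:ℝ):ℂ) * ((starRingEnd ℂ) b) ^ k.toNat else 0) := by
    rw [intervalIntegral.integral_congr (g := fun θ : ℝ =>
      -((1 - (starRingEnd ℂ) b * Complex.exp (Complex.I * θ))⁻¹ *
          Complex.exp (-(Complex.I * (k-1 : ℤ) * θ))) +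
        b * ((1 - (starRingEnd ℂ) b * Complex.exp (Complex.I * θ))⁻¹ *
          Complex.exp (-(Complex.I * k * θ)))) (fun θ _ => hpt θ)]
    rw [intervalIntegral.integral_add (f := fun θ : ℝ =>
        -((1 - (starRingEnd ℂ) b * Complex.exp (Complex.I * θ))⁻¹ *
            Complex.exp (-(Complex.I * (k-1 : ℤ) * θ)))) (g := fun θ : ℝ =>
          b * ((1 - (starRingEnd ℂ) b * Complex.exp (Complex.I * θ))⁻¹ *
            Complex.exp (-(Complex.I * k * θ))))
      ((Continuous.neg (hcont_inv.mul (by fun_prop))).intervalIntegrable _ _)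
      ((continuous_const.mul (hcont_inv.mul (by fun_prop))).intervalIntegrable _ _),
      intervalIntegral.integral_neg, intervalIntegral.integral_const_mul]
    have g1 := geom_coeff ((starRingEnd ℂ) b) hcb (k-1)
    have g2 := geom_coeff ((starRingEnd ℂ) b) hcb k
    push_cast at g1 g2 ⊢
    rw [g1, g2]
  rw [hint]
  have hpi := two_pi_ne
  unfold uu
  rcases lt_trichotomy k 0 with hk | hk | hk
  · rw [if_neg (by omega), if_neg (by omega), if_neg (by omega), if_neg (by omega)]
    simp
  · subst hk
    rw [if_neg (by omega), if_pos (by omega), if_pos rfl]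
    push_cast at hpi ⊢
    field_simp
    ring
  · rw [if_pos (by omega), if_pos (by omega), if_neg (by omega), if_pos hk]
    have : k.toNat = (k-1).toNat + 1 := by omega
    rw [this, pow_succ]
    push_cast at hpi ⊢
    field_simp
    ring

lemma norm_exp_neg_I_mul' (θ : ℝ) : ‖Complex.exp (-(Complex.I * θ))‖ = 1 := by
  rw [Complex.norm_exp]; simp

lemma symbolCoeff_neg_uinv (b : ℂ) (hb1 : ‖b‖ < 1) (k : ℤ) :
    symbolCoeff (fun w => -(((w - b) / (1 - (starRingEnd ℂ) b * w))⁻¹)) k = -(vv b k) := by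
  have hnz : ∀ θ : ℝ, Complex.exp (Complex.I * θ) - b ≠ 0 := by
    intro θ h
    have h2 : Complex.exp (Complex.I * θ) = b := by linear_combination h
    have := norm_exp_I_mul' θ
    rw [h2] at this
    rw [this] at hb1
    exact lt_irrefl _ hb1
  have hnw : ∀ θ : ℝ, 1 - b * Complex.exp (-(Complex.I * θ)) ≠ 0 := by
    intro θ h
    have h2 : b * Complex.exp (-(Complex.I * θ)) = 1 := by linear_combination -h
    have h3 : ‖b * Complex.exp (-(Complex.I * θ))‖ < 1 := by
      rw [norm_mul, norm_exp_neg_I_mul', mul_one]; exact hb1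
    rw [h2] at h3; simp at h3
  have hcont_inv : Continuous fun θ : ℝ =>
      (1 - b * Complex.exp (-(Complex.I * θ)))⁻¹ :=
    Continuous.inv₀ (by fun_prop) hnw
  unfold symbolCoeff
  have hpt : ∀ θ : ℝ,
      (-(((Complex.exp (Complex.I * θ) - b) /
          (1 - (starRingEnd ℂ) b * Complex.exp (Complex.I * θ)))⁻¹)) *
        Complex.exp (-(Complex.I * k * θ)) =
      -((1 - b * Complex.exp (-(Complex.I * θ)))⁻¹ *
          Complex.exp (-(Complex.I * (k+1 : ℤ) * θ))) +
        (starRingEnd ℂ) b * ((1 - b * Complex.exp (-(Complex.I * θ)))⁻¹ *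
          Complex.exp (-(Complex.I * k * θ))) := by
    intro θ
    have he : Complex.exp (-(Complex.I * ((k:ℤ)+1 : ℤ) * θ)) =
        Complex.exp (-(Complex.I * θ)) * Complex.exp (-(Complex.I * k * θ)) := by
      rw [← Complex.exp_add]
      congr 1
      push_cast
      ring
    have hw : Complex.exp (-(Complex.I * (θ:ℂ))) = (Complex.exp (Complex.I * (θ:ℂ)))⁻¹ :=
      Complex.exp_neg _
    rw [inv_div, he, hw]
    have hz := Complex.exp_ne_zero (Complex.I * (θ:ℂ))
    have h1 : 1 - b * (Complex.exp (Complex.I * (θ:ℂ)))⁻¹ ≠ 0 := by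
      rw [← hw]; exact hnw θ
    field_simp [hnz θ]
    ring
  have hint : (∫ θ in (0:ℝ)..(2*Real.pi),
      (-(((Complex.exp (Complex.I * θ) - b) /
          (1 - (starRingEnd ℂ) b * Complex.exp (Complex.I * θ)))⁻¹)) *
        Complex.exp (-(Complex.I * k * θ))) =
      -(if k+1 ≤ 0 then ((2*Real.pi:ℝ):ℂ) * b ^ (-(k+1)).toNat else 0) +
        (starRingEnd ℂ) b * (if k ≤ 0 then ((2*Real.pi:ℝ):ℂ) * b ^ (-k).toNat else 0) := by
    rw [intervalIntegral.integral_congr (g := fun θ : ℝ =>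
      -((1 - b * Complex.exp (-(Complex.I * θ)))⁻¹ *
          Complex.exp (-(Complex.I * (k+1 : ℤ) * θ))) +
        (starRingEnd ℂ) b * ((1 - b * Complex.exp (-(Complex.I * θ)))⁻¹ *
          Complex.exp (-(Complex.I * k * θ)))) (fun θ _ => hpt θ)]
    rw [intervalIntegral.integral_add (f := fun θ : ℝ =>
        -((1 - b * Complex.exp (-(Complex.I * θ)))⁻¹ *
            Complex.exp (-(Complex.I * (k+1 : ℤ) * θ)))) (g := fun θ : ℝ =>
          (starRingEnd ℂ) b * ((1 - b * Complex.exp (-(Complex.I * θ)))⁻¹ *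
            Complex.exp (-(Complex.I * k * θ))))
      ((Continuous.neg (hcont_inv.mul (by fun_prop))).intervalIntegrable _ _)
      ((continuous_const.mul (hcont_inv.mul (by fun_prop))).intervalIntegrable _ _),
      intervalIntegral.integral_neg, intervalIntegral.integral_const_mul]
    have g1 := geom_coeff_neg b hb1 (k+1)
    have g2 := geom_coeff_neg b hb1 k
    push_cast at g1 g2 ⊢
    rw [g1, g2]
  rw [hint]
  have hpi := two_pi_ne
  unfold vv
  rcases lt_trichotomy k 0 with hk | hk | hk
  · rw [if_pos (by omega), if_pos (by omega), if_neg (by omega), if_pos hk]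
    have h1 : (-k).toNat = (-k-1).toNat + 1 := by omega
    have h2 : (-(k+1)).toNat = (-k-1).toNat := by omega
    rw [h1, h2, pow_succ]
    push_cast at hpi ⊢
    field_simp
    ring
  · subst hk
    rw [if_neg (by omega), if_pos (by omega), if_pos rfl]
    push_cast at hpi ⊢
    field_simp
    ring
  · rw [if_neg (by omega), if_neg (by omega), if_neg (by omega), if_neg (by omega)]
    simp

lemma det_block {N : ℕ} (P Q : Matrix (Fin N) (Fin N) ℂ) (x : ℂ) :
    Matrix.det (Matrix.fromBlocks (x • 1) P Q (x • 1)) = Matrix.det ((x^2) • 1 - P * Q) := by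
  have key : ∀ y : ℂ, y ≠ 0 →
      Matrix.det (Matrix.fromBlocks (y • (1 : Matrix (Fin N) (Fin N) ℂ)) P Q (y • 1)) =
      Matrix.det ((y^2) • (1 : Matrix (Fin N) (Fin N) ℂ) - P * Q) := by
    intro y hy
    letI : Invertible (y • (1 : Matrix (Fin N) (Fin N) ℂ)) :=
      ⟨y⁻¹ • 1, by rw [smul_mul_smul_comm, inv_mul_cancel₀ hy, one_mul, one_smul],
        by rw [smul_mul_smul_comm, mul_inv_cancel₀ hy, one_mul, one_smul]⟩
    rw [Matrix.det_fromBlocks₂₂]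
    have hinv : ⅟(y • (1 : Matrix (Fin N) (Fin N) ℂ)) = y⁻¹ • 1 := rfl
    rw [hinv]
    have h1 : Matrix.det (y • (1 : Matrix (Fin N) (Fin N) ℂ)) = y ^ N := by
      simp [Matrix.det_smul]
    have h2 : P * (y⁻¹ • (1 : Matrix (Fin N) (Fin N) ℂ)) * Q = y⁻¹ • (P * Q) := by
      rw [Matrix.mul_smul, Matrix.mul_one, Matrix.smul_mul]
    have h3 : (y^2) • (1 : Matrix (Fin N) (Fin N) ℂ) - P * Q =
        y • (y • (1 : Matrix (Fin N) (Fin N) ℂ) - y⁻¹ • (P * Q)) := by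
      rw [smul_sub, smul_smul, smul_smul, mul_inv_cancel₀ hy, one_smul, ← pow_two]
    rw [h1, h2, h3, Matrix.det_smul]
    simp
  rcases eq_or_ne x 0 with rfl | hx
  · have hc1 : Continuous fun y : ℂ =>
        Matrix.det (Matrix.fromBlocks (y • (1 : Matrix (Fin N) (Fin N) ℂ)) P Q (y • 1)) := by
      apply Continuous.matrix_det
      apply continuous_matrix
      intro i j
      rcases i with i | i <;> rcases j with j | j <;>
        simp [Matrix.fromBlocks, Matrix.smul_apply] <;> fun_prop
    have hc2 : Continuous fun y : ℂ =>
        Matrix.det ((y^2) • (1 : Matrix (Fin N) (Fin N) ℂ) - P * Q) := by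
      apply Continuous.matrix_det
      apply continuous_matrix
      intro i j
      simp [Matrix.sub_apply, Matrix.smul_apply]
      fun_prop
    have heq : (fun y : ℂ =>
        Matrix.det (Matrix.fromBlocks (y • (1 : Matrix (Fin N) (Fin N) ℂ)) P Q (y • 1))) =
        fun y : ℂ => Matrix.det ((y^2) • (1 : Matrix (Fin N) (Fin N) ℂ) - P * Q) := by
      apply Continuous.ext_on (dense_compl_singleton (0:ℂ)) hc1 hc2
      intro y hy
      exact key y hy
    exact congrFun heq 0
  · exact key x hx

lemma det_rank_one {N : ℕ} (hN : 1 ≤ N) (μ c : ℂ) (v w : Fin N → ℂ) :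
    Matrix.det (μ • (1 : Matrix (Fin N) (Fin N) ℂ) +
        c • (Matrix.replicateCol (Fin 1) v * Matrix.replicateRow (Fin 1) w)) =
      μ ^ (N-1) * (μ + c * ∑ i, w i * v i) := by
  rcases eq_or_ne μ 0 with rfl | hμ
  · obtain rfl | hN2 : N = 1 ∨ 2 ≤ N := by omega
    · simp [Matrix.det_fin_one, Matrix.mul_apply, Fin.sum_univ_one, mul_comm]
    · have hz : Matrix.det (Matrix.replicateCol (Fin 1) v * Matrix.replicateRow (Fin 1) w) = 0 := by
        have : (Matrix.replicateCol (Fin 1) v * Matrix.replicateRow (Fin 1) w) =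
            Matrix.of fun i j => v i * ((Matrix.of fun _ j : Fin N => w j) i j) := by
          ext i j
          simp [Matrix.mul_apply, Fin.sum_univ_one]
        rw [this, Matrix.det_mul_column]
        have h01 : (⟨0, by omega⟩ : Fin N) ≠ (⟨1, by omega⟩ : Fin N) := by
          simp [Fin.ext_iff]
        have hz2 : Matrix.det (Matrix.of fun (_ : Fin N) (j : Fin N) => w j) = 0 :=
          Matrix.det_zero_of_row_eq (M := Matrix.of fun (_ : Fin N) (j : Fin N) => w j) h01 rfl
        rw [hz2]
        ring
      rw [zero_smul, zero_add, Matrix.det_smul, hz]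
      have : (0:ℂ) ^ (N - 1) = 0 := by
        apply zero_pow
        omega
      rw [this]
      ring
  · have hfact : μ • (1 : Matrix (Fin N) (Fin N) ℂ) +
        c • (Matrix.replicateCol (Fin 1) v * Matrix.replicateRow (Fin 1) w) =
        μ • (1 + Matrix.replicateCol (Fin 1) ((c/μ) • v) * Matrix.replicateRow (Fin 1) w) := by
      rw [smul_add]
      congr 1
      rw [Matrix.replicateCol_smul, Matrix.smul_mul, smul_smul]
      congr 1
      field_simp
    rw [hfact, Matrix.det_smul,
      show (1 + Matrix.replicateCol (Fin 1) ((c/μ) • v) * Matrix.replicateRow (Fin 1) w :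
          Matrix (Fin N) (Fin N) ℂ).det =
        1 + w ⬝ᵥ ((c/μ) • v) from Matrix.det_one_add_replicateCol_mul_replicateRow _ _]
    have hdot : w ⬝ᵥ ((c/μ) • v) = (c/μ) * ∑ i, w i * v i := by
      simp [dotProduct, Finset.mul_sum]
      apply Finset.sum_congr rfl
      intro i _
      ring
    rw [hdot]
    have hcard : Fintype.card (Fin N) = N := by simp
    rw [hcard]
    have hpow : μ ^ N = μ ^ (N-1) * μ := by
      conv_lhs => rw [show N = (N-1)+1 by omega]
      rw [pow_succ]
    rw [hpow]
    field_simp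

lemma key_sum (b : ℂ) (N m n : ℕ) (hm : m < N) (hn : n < N) :
    (∑ p ∈ Finset.range N, uu b ((m:ℤ) - p) * vv b ((p:ℤ) - n)) =
      (if m = n then 1 else 0) - (1 - b * (starRingEnd ℂ) b) *
        ((starRingEnd ℂ) b ^ m * b ^ n) := by
  set c := (starRingEnd ℂ) b with hc
  set β := b * c with hβ
  have hbc : ∀ j : ℕ, c ^ j * b ^ j = β ^ j := by
    intro j; rw [hβ, ← mul_pow, mul_comm]
  have hrestrict : (∑ p ∈ Finset.range N, uu b ((m:ℤ) - p) * vv b ((p:ℤ) - n)) =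
      ∑ p ∈ Finset.range (min m n + 1), uu b ((m:ℤ) - p) * vv b ((p:ℤ) - n) := by
    symm
    apply Finset.sum_subset
    · intro p hp
      simp only [Finset.mem_range] at hp ⊢
      omega
    · intro p hp hnp
      simp only [Finset.mem_range] at hp hnp
      rcases lt_or_ge m p with h | h
      · rw [uu, if_neg (by omega), if_neg (by omega), zero_mul]
      · have : n < p := by omega
        rw [vv, if_neg (by omega), if_neg (by omega), mul_zero]
  rw [hrestrict]
  have huu_zero : uu b 0 = -b := by rw [uu]; simp
  have hvv_zero : vv b 0 = -c := by rw [vv]; simp [hc]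
  have hgeom : ∀ j : ℕ, (∑ q ∈ Finset.range j, β ^ q) * (β - 1) = β ^ j - 1 :=
    fun j => geom_sum_mul β j
  rcases lt_trichotomy m n with hlt | heq | hgt
  · -- m < n : min = m
    rw [min_eq_left (by omega : m ≤ n)]
    rw [Finset.sum_range_succ]
    have hlast : uu b ((m:ℤ) - m) * vv b ((m:ℤ) - n) =
        (-b) * (b ^ (n - m - 1) * (1 - β)) := by
      rw [show (m:ℤ) - m = 0 by ring, huu_zero, vv, if_neg (by omega), if_pos (by omega)]
      congr 3
      omega
    have hterm : ∀ p ∈ Finset.range m, uu b ((m:ℤ) - p) * vv b ((p:ℤ) - n) =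
        ((1 - β)^2 * b ^ (n - m)) * β ^ (m - 1 - p) := by
      intro p hp
      simp only [Finset.mem_range] at hp
      rw [uu, if_neg (by omega), if_pos (by omega), vv, if_neg (by omega), if_pos (by omega)]
      have e1 : ((m:ℤ) - p - 1).toNat = m - 1 - p := by omega
      have e2 : (-(((p:ℤ)) - n) - 1).toNat = (n - m) + (m - 1 - p) := by omega
      rw [e1, e2, pow_add, ← hbc (m - 1 - p)]
      ring
    rw [Finset.sum_congr rfl hterm, hlast, ← Finset.mul_sum,
      show (∑ p ∈ Finset.range m, β ^ (m-1-p)) = ∑ p ∈ Finset.range m, β ^ p from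
        Finset.sum_range_reflect (fun q => β ^ q) m,
      if_neg (by omega : ¬ m = n)]
    have e3 : b * b ^ (n - m - 1) = b ^ (n - m) := by
      have h5 : n - m = (n - m - 1) + 1 := by omega
      calc b * b ^ (n - m - 1) = b ^ ((n - m - 1) + 1) := (pow_succ' b _).symm
        _ = b ^ (n - m) := by rw [← h5]
    have e4 : c ^ m * b ^ n = b ^ (n - m) * β ^ m := by
      have h5 : b ^ n = b ^ (n - m) * b ^ m := by
        rw [← pow_add]
        congr 1
        omega
      rw [h5, ← hbc m]
      ring
    linear_combination (-(1-β) * b^(n-m)) * hgeom m + (-(1-β)) * e3 + (1-β) * e4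
  · -- m = n
    subst heq
    rw [min_self, Finset.sum_range_succ]
    have hlast : uu b ((m:ℤ) - m) * vv b ((m:ℤ) - m) = b * c := by
      rw [show (m:ℤ) - m = 0 by ring, huu_zero, hvv_zero]
      ring
    have hterm : ∀ p ∈ Finset.range m, uu b ((m:ℤ) - p) * vv b ((p:ℤ) - m) =
        (1 - β)^2 * β ^ (m - 1 - p) := by
      intro p hp
      simp only [Finset.mem_range] at hp
      rw [uu, if_neg (by omega), if_pos (by omega), vv, if_neg (by omega), if_pos (by omega)]
      have e1 : ((m:ℤ) - p - 1).toNat = m - 1 - p := by omega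
      have e2 : (-(((p:ℤ)) - m) - 1).toNat = m - 1 - p := by omega
      rw [e1, e2, ← hbc (m - 1 - p)]
      ring
    rw [Finset.sum_congr rfl hterm, hlast, ← Finset.mul_sum,
      show (∑ p ∈ Finset.range m, β ^ (m-1-p)) = ∑ p ∈ Finset.range m, β ^ p from
        Finset.sum_range_reflect (fun q => β ^ q) m,
      if_pos rfl]
    linear_combination (-(1-β)) * hgeom m + (1-β) * hbc m
  · -- n < m : min = n
    rw [min_eq_right (by omega : n ≤ m)]
    rw [Finset.sum_range_succ]
    have hlast : uu b ((m:ℤ) - n) * vv b ((n:ℤ) - n) =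
        (c ^ (m - n - 1) * (1 - β)) * (-c) := by
      rw [show (n:ℤ) - n = 0 by ring, hvv_zero, uu, if_neg (by omega), if_pos (by omega)]
      congr 3
      omega
    have hterm : ∀ p ∈ Finset.range n, uu b ((m:ℤ) - p) * vv b ((p:ℤ) - n) =
        ((1 - β)^2 * c ^ (m - n)) * β ^ (n - 1 - p) := by
      intro p hp
      simp only [Finset.mem_range] at hp
      rw [uu, if_neg (by omega), if_pos (by omega), vv, if_neg (by omega), if_pos (by omega)]
      have e1 : ((m:ℤ) - p - 1).toNat = (m - n) + (n - 1 - p) := by omega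
      have e2 : (-(((p:ℤ)) - n) - 1).toNat = n - 1 - p := by omega
      rw [e1, e2, pow_add, ← hbc (n - 1 - p)]
      ring
    rw [Finset.sum_congr rfl hterm, hlast, ← Finset.mul_sum,
      show (∑ p ∈ Finset.range n, β ^ (n-1-p)) = ∑ p ∈ Finset.range n, β ^ p from
        Finset.sum_range_reflect (fun q => β ^ q) n,
      if_neg (by omega : ¬ m = n)]
    have e3 : c * c ^ (m - n - 1) = c ^ (m - n) := by
      have h5 : m - n = (m - n - 1) + 1 := by omega
      calc c * c ^ (m - n - 1) = c ^ ((m - n - 1) + 1) := (pow_succ' c _).symm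
        _ = c ^ (m - n) := by rw [← h5]
    have e4 : c ^ m * b ^ n = c ^ (m - n) * β ^ n := by
      have h5 : c ^ m = c ^ (m - n) * c ^ n := by
        rw [← pow_add]
        congr 1
        omega
      rw [h5, ← hbc n]
      ring
    linear_combination (-(1-β) * c^(m-n)) * hgeom n + (-(1-β)) * e3 + (1-β) * e4

/-- Section 5.3 example: entanglement spectrum of the AIII chain with
`f(z) = z⁻¹(z−b)²`, `0 < |b| < 1`.  The characteristic polynomial of `Â_N = 1 − 2C_N`
is `(λ² − 1)^{N−1}(λ² − |b|^{2N})`. -/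

theorem aiii_example_char_poly
    (b : ℂ) (hb0 : 0 < ‖b‖) (hb1 : ‖b‖ < 1)
    (N : ℕ) (hN : 1 ≤ N) (lam : ℂ) :
    blockToeplitzDet
      (fun w => !![lam, -((w - b) / (1 - (starRingEnd ℂ) b * w));
                   -(((w - b) / (1 - (starRingEnd ℂ) b * w))⁻¹), lam]) N
      = (lam ^ 2 - 1) ^ (N - 1) * (lam ^ 2 - ((‖b‖ ^ (2 * N) : ℝ) : ℂ)) := by
  classical
  set Φ : ℂ → Matrix (Fin 2) (Fin 2) ℂ :=
    fun w => !![lam, -((w - b) / (1 - (starRingEnd ℂ) b * w));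
                -(((w - b) / (1 - (starRingEnd ℂ) b * w))⁻¹), lam] with hΦdef
  set c : ℂ := (starRingEnd ℂ) b with hc
  set β : ℂ := b * c with hβ
  -- entry lemmas
  have h00 : ∀ k : ℤ, blockSymbolCoeff Φ k 0 0 = if k = 0 then lam else 0 := by
    intro k
    show symbolCoeff (fun w => Φ w 0 0) k = _
    have : (fun w => Φ w 0 0) = fun _ => lam := by
      funext w
      simp [hΦdef]
    rw [this, symbolCoeff_const]
  have h11 : ∀ k : ℤ, blockSymbolCoeff Φ k 1 1 = if k = 0 then lam else 0 := by
    intro k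
    show symbolCoeff (fun w => Φ w 1 1) k = _
    have : (fun w => Φ w 1 1) = fun _ => lam := by
      funext w
      simp [hΦdef]
    rw [this, symbolCoeff_const]
  have h01 : ∀ k : ℤ, blockSymbolCoeff Φ k 0 1 = -(uu b k) := by
    intro k
    show symbolCoeff (fun w => Φ w 0 1) k = _
    have : (fun w => Φ w 0 1) = fun w => -((w - b) / (1 - (starRingEnd ℂ) b * w)) := by
      funext w
      simp [hΦdef, hc]
    rw [this, symbolCoeff_neg_u b hb1]
  have h10 : ∀ k : ℤ, blockSymbolCoeff Φ k 1 0 = -(vv b k) := by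
    intro k
    show symbolCoeff (fun w => Φ w 1 0) k = _
    have : (fun w => Φ w 1 0) =
        fun w => -(((w - b) / (1 - (starRingEnd ℂ) b * w))⁻¹) := by
      funext w
      simp [hΦdef, hc]
    rw [this, symbolCoeff_neg_uinv b hb1]
  -- the Toeplitz blocks
  set A : Matrix (Fin N) (Fin N) ℂ :=
    Matrix.of (fun m n : Fin N => uu b ((m : ℤ) - (n : ℤ))) with hA
  set B : Matrix (Fin N) (Fin N) ℂ :=
    Matrix.of (fun m n : Fin N => vv b ((m : ℤ) - (n : ℤ))) with hB
  -- reindex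
  let e : Fin N ⊕ Fin N ≃ Fin N × Fin 2 :=
    { toFun := Sum.elim (fun m => (m, 0)) (fun m => (m, 1)),
      invFun := fun p => if p.2 = 0 then Sum.inl p.1 else Sum.inr p.1,
      left_inv := by rintro (m|m) <;> simp,
      right_inv := by
        rintro ⟨m, j⟩
        fin_cases j <;> simp }
  rw [blockToeplitzDet, ← Matrix.det_submatrix_equiv_self e]
  have hsub : (Matrix.of fun p q : Fin N × Fin 2 =>
        blockSymbolCoeff Φ ((p.1 : ℤ) - (q.1 : ℤ)) p.2 q.2).submatrix e e =
      Matrix.fromBlocks (lam • 1) (-A) (-B) (lam • 1) := by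
    ext i j
    rcases i with i | i <;> rcases j with j | j
    · show blockSymbolCoeff Φ ((i : ℤ) - (j : ℤ)) 0 0 = (lam • (1:Matrix (Fin N) (Fin N) ℂ)) i j
      rw [h00]
      rcases eq_or_ne i j with rfl | hij
      · simp
      · have hne : (i : ℤ) - (j : ℤ) ≠ 0 := by
          have hij2 : (i : ℕ) ≠ (j : ℕ) := fun h => hij (Fin.ext h)
          omega
        rw [if_neg hne]
        simp [Matrix.one_apply, hij]
    · show blockSymbolCoeff Φ ((i : ℤ) - (j : ℤ)) 0 1 = (-A) i j
      rw [h01]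
      rfl
    · show blockSymbolCoeff Φ ((i : ℤ) - (j : ℤ)) 1 0 = (-B) i j
      rw [h10]
      rfl
    · show blockSymbolCoeff Φ ((i : ℤ) - (j : ℤ)) 1 1 = (lam • (1:Matrix (Fin N) (Fin N) ℂ)) i j
      rw [h11]
      rcases eq_or_ne i j with rfl | hij
      · simp
      · have hne : (i : ℤ) - (j : ℤ) ≠ 0 := by
          have hij2 : (i : ℕ) ≠ (j : ℕ) := fun h => hij (Fin.ext h)
          omega
        rw [if_neg hne]
        simp [Matrix.one_apply, hij]
  rw [hsub, det_block, Matrix.neg_mul, Matrix.mul_neg, neg_neg]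
  -- compute A * B
  have hAB : A * B = 1 - (1 - β) •
      (Matrix.replicateCol (Fin 1) (fun m : Fin N => c ^ (m : ℕ)) *
        Matrix.replicateRow (Fin 1) (fun n : Fin N => b ^ (n : ℕ))) := by
    ext m n
    rw [Matrix.mul_apply]
    have hks := key_sum b N m n m.isLt n.isLt
    have hfin : (∑ p : Fin N, A m p * B p n) =
        ∑ p ∈ Finset.range N, uu b ((m:ℤ) - p) * vv b ((p:ℤ) - n) := by
      rw [← Fin.sum_univ_eq_sum_range (fun p : ℕ => uu b ((m:ℤ) - p) * vv b ((p:ℤ) - n)) N]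
      rfl
    rw [hfin, hks]
    simp only [Matrix.sub_apply, Matrix.smul_apply, Matrix.one_apply, Matrix.mul_apply,
      Matrix.replicateCol_apply, Matrix.replicateRow_apply, Finset.univ_unique, Finset.sum_singleton,
      smul_eq_mul]
    congr 1
    by_cases h : (m:ℕ) = (n:ℕ)
    · rw [if_pos h, if_pos (Fin.ext h)]
    · rw [if_neg h, if_neg (fun hh => h (congrArg Fin.val hh))]
  rw [hAB]
  have hrw : (lam^2) • (1 : Matrix (Fin N) (Fin N) ℂ) -
      (1 - (1 - β) • (Matrix.replicateCol (Fin 1) (fun m : Fin N => c ^ (m : ℕ)) *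
        Matrix.replicateRow (Fin 1) (fun n : Fin N => b ^ (n : ℕ)))) =
      (lam^2 - 1) • (1 : Matrix (Fin N) (Fin N) ℂ) +
      (1 - β) • (Matrix.replicateCol (Fin 1) (fun m : Fin N => c ^ (m : ℕ)) *
        Matrix.replicateRow (Fin 1) (fun n : Fin N => b ^ (n : ℕ))) := by
    ext i j
    simp only [Matrix.sub_apply, Matrix.add_apply, Matrix.smul_apply, Matrix.one_apply,
      smul_eq_mul]
    ring
  rw [hrw, det_rank_one hN]
  -- the scalar sum
  have hdot : (∑ i : Fin N, b ^ (i:ℕ) * c ^ (i:ℕ)) = ∑ i ∈ Finset.range N, β ^ i := by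
    rw [← Fin.sum_univ_eq_sum_range (fun i => β ^ i) N]
    apply Finset.sum_congr rfl
    intro i _
    rw [hβ, mul_pow]
  have hgeo : (1 - β) * (∑ i ∈ Finset.range N, β ^ i) = 1 - β ^ N := by
    have := geom_sum_mul β N
    linear_combination -this
  have hβval : β ^ N = ((‖b‖ ^ (2 * N) : ℝ) : ℂ) := by
    have h1 : β = ((‖b‖^2 : ℝ) : ℂ) := by
      rw [hβ, hc, Complex.mul_conj]
      norm_cast
      rw [Complex.normSq_eq_norm_sq]
    rw [h1]
    rw [show ‖b‖ ^ (2 * N) = (‖b‖^2) ^ N by rw [← pow_mul]]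
    push_cast
    ring
  rw [hdot, ← hβval]
  rw [show lam ^ 2 - 1 + (1 - β) * ∑ i ∈ Finset.range N, β ^ i =
    lam ^ 2 - 1 + (1 - β ^ N) by rw [hgeo]]
  ring
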